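/- Let 0 = r_0 < r_1 < ... < r_n be strictly increasing integers. For k = 0,...,n-1 the Gelfond-Bernstein basis function H_k(t) = (-1)^{n-k} r_{k+1}\cdots r_n [r_k,...,r_n]f_t has a zero of order exactly n-k at t = 1, i.e., H_k^{(j)}(1) = 0 for 0 \le j \le n-k-1 and H_k^{(n-k)}(1) \ne 0. -/
import Mathlib


/-- The divided difference `[x 0, ..., x n] f` at pairwise distinct points,
given by the explicit formula `∑ i, f (x i) / ∏_{j ≠ i} (x i - x j)`. -/
noncomputable def divSum (n : ℕ) (x : Fin (n+1) → ℝ) (f : ℝ → ℝ) : ℝ :=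
  ∑ i : Fin (n+1), f (x i) / ∏ j ∈ Finset.univ.erase i, (x i - x j)


/-- The Gelfond-Bernstein basis function `H^n_{k,Λ}` associated with the sequence
`Λ = (r 0, ..., r n)`: `H^n_k (t) = (-1)^(n-k) r_{k+1} ⋯ r_n [r_k, ..., r_n] f_t`
for `k ≤ n-1` and `H^n_n (t) = t ^ (r n)`, where `f_t x = t ^ x` (real power). -/
noncomputable def GB (n : ℕ) (r : Fin (n+1) → ℝ) (k : Fin (n+1)) (t : ℝ) : ℝ :=
  if k.val = n then t ^ (r k)
  else (-1 : ℝ) ^ (n - k.val) * (∏ j ∈ Finset.Ioi k, r j) *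
    divSum (n - k.val)
      (fun i => r ⟨k.val + i.val, by have h1 := i.isLt; have h2 := k.isLt; omega⟩)
      (fun x => t ^ x)

open Polynomial Finset

lemma coeff_lagrange_basis {N : ℕ} (x : Fin (N+1) → ℝ) (hx : Function.Injective x)
    (i : Fin (N+1)) :
    (Lagrange.basis Finset.univ x i).coeff N = (∏ j ∈ Finset.univ.erase i, (x i - x j))⁻¹ := by
  have hvs : Set.InjOn x (Finset.univ : Finset (Fin (N+1))) := hx.injOn
  have hdeg : (Lagrange.basis Finset.univ x i).degree = (N : WithBot ℕ) := by
    rw [Lagrange.degree_basis hvs (mem_univ i)]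
    simp
  have hnat : (Lagrange.basis Finset.univ x i).natDegree = N :=
    natDegree_eq_of_degree_eq_some hdeg
  rw [show (Lagrange.basis Finset.univ x i).coeff N = (Lagrange.basis Finset.univ x i).leadingCoeff
    from by rw [Polynomial.leadingCoeff, hnat]]
  unfold Lagrange.basis
  rw [leadingCoeff_prod]
  rw [← Finset.prod_inv_distrib]
  refine Finset.prod_congr rfl fun j hj => ?_
  have hne : x i ≠ x j := fun h => (Finset.mem_erase.mp hj).1 (hx h).symm
  unfold Lagrange.basisDivisor
  rw [leadingCoeff_mul, leadingCoeff_C, (monic_X_sub_C (x j)).leadingCoeff, mul_one]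

lemma divSum_eval {N : ℕ} (x : Fin (N+1) → ℝ) (hx : Function.Injective x)
    (P : Polynomial ℝ) (hP : P.degree < (N+1 : ℕ)) :
    divSum N x (fun y => P.eval y) = P.coeff N := by
  have hvs : Set.InjOn x (Finset.univ : Finset (Fin (N+1))) := hx.injOn
  have hInt : Lagrange.interpolate Finset.univ x (fun i => P.eval (x i)) = P := by
    refine (Lagrange.eq_interpolate hvs ?_).symm
    simpa using hP
  conv_rhs => rw [← hInt]
  rw [Lagrange.interpolate_apply, Polynomial.finset_sum_coeff]
  refine Finset.sum_congr rfl fun i _ => ?_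
  rw [Polynomial.coeff_C_mul, coeff_lagrange_basis x hx i, div_eq_mul_inv]

lemma iteratedDeriv_polyEval (j : ℕ) (Q : Polynomial ℝ) :
    iteratedDeriv j (fun t => Q.eval t) = fun t => (Polynomial.derivative^[j] Q).eval t := by
  induction j with
  | zero => simp only [iteratedDeriv_zero, Function.iterate_zero, id_eq]
  | succ j ih =>
    rw [iteratedDeriv_succ, ih, Function.iterate_succ_apply']
    funext t
    exact Polynomial.deriv (𝕜 := ℝ) (p := Polynomial.derivative^[j] Q) (x := t)

/-- For strictly increasing integer exponents with  and , the
Gelfond-Bernstein basis function  has a zero of order exactly  at . -/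
theorem stmt5 (n : ℕ) (m : Fin (n+1) → ℕ) (hm : StrictMono m) (h0 : m 0 = 0)
    (k : Fin (n+1)) (hk : k.val < n) :
    (∀ j : ℕ, j ≤ n - k.val - 1 → iteratedDeriv j (GB n (fun i => (m i : ℝ)) k) 1 = 0) ∧
    iteratedDeriv (n - k.val) (GB n (fun i => (m i : ℝ)) k) 1 ≠ 0 := by
  set N := n - k.val with hN
  have hN1 : 1 ≤ N := by omega
  set M : Fin (N+1) → ℕ := fun i => m ⟨k.val + i.val, by omega⟩ with hM
  set x : Fin (N+1) → ℝ := fun i => (M i : ℝ) with hxdef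
  have hx : Function.Injective x := by
    intro a b hab
    have : M a = M b := Nat.cast_injective hab
    have := hm.injective this
    have := Fin.mk.inj_iff.mp this
    exact Fin.ext (by omega)
  set d : Fin (N+1) → ℝ := fun i => ∏ j ∈ Finset.univ.erase i, (x i - x j) with hd
  set C₀ : ℝ := (-1 : ℝ) ^ N * (∏ j ∈ Finset.Ioi k, (m j : ℝ)) with hC₀
  have hC₀ne : C₀ ≠ 0 := by
    apply mul_ne_zero
    · exact pow_ne_zero _ (by norm_num)
    · refine Finset.prod_ne_zero_iff.mpr fun j hj => ?_
      have hj' : k < j := Finset.mem_Ioi.mp hj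
      have : m 0 < m j := hm (by exact lt_of_le_of_lt (Fin.zero_le k) hj')
      simp only [h0] at this
      positivity
  set Q : Polynomial ℝ :=
    Polynomial.C C₀ * ∑ i : Fin (N+1), Polynomial.C (d i)⁻¹ * Polynomial.X ^ (M i) with hQ
  have hGB : GB n (fun i => (m i : ℝ)) k = fun t => Q.eval t := by
    funext t
    show (if k.val = n then _ else _) = _
    rw [if_neg (by omega)]
    show ((-1:ℝ)^N * ∏ j ∈ Finset.Ioi k, (m j:ℝ)) * divSum N x (fun y => t ^ y) = Q.eval t
    simp only [hQ, Polynomial.eval_mul, Polynomial.eval_C, Polynomial.eval_finset_sum,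
      Polynomial.eval_pow, Polynomial.eval_X]
    unfold divSum
    congr 1
    refine Finset.sum_congr rfl fun i _ => ?_
    simp only [hxdef, hd]
    rw [Real.rpow_natCast, div_eq_mul_inv, mul_comm]
  -- key computation
  have key : ∀ j : ℕ, j ≤ N →
      iteratedDeriv j (GB n (fun i => (m i : ℝ)) k) 1 = C₀ * (descPochhammer ℝ j).coeff N := by
    intro j hj
    rw [hGB, iteratedDeriv_polyEval]
    have hdc : (descPochhammer ℝ j).coeff N
        = divSum N x (fun y => (descPochhammer ℝ j).eval y) := by
      refine (divSum_eval x hx _ ?_).symm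
      refine lt_of_le_of_lt (Polynomial.degree_le_natDegree) ?_
      rw [descPochhammer_natDegree]
      exact_mod_cast Nat.lt_succ_of_le hj
    rw [hdc]
    unfold divSum
    rw [hQ, Polynomial.iterate_derivative_C_mul, Polynomial.iterate_derivative_sum]
    simp only [Polynomial.iterate_derivative_C_mul,
      Polynomial.iterate_derivative_X_pow_eq_smul, Polynomial.eval_mul, Polynomial.eval_C,
      Polynomial.eval_finset_sum, Polynomial.eval_smul, Polynomial.eval_pow, Polynomial.eval_X,
      smul_eq_mul, one_pow, mul_one]
    congr 1
    refine Finset.sum_congr rfl fun i _ => ?_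
    simp only [hxdef, hd]
    rw [descPochhammer_eval_eq_descFactorial, div_eq_mul_inv, mul_comm]
  constructor
  · intro j hj
    rw [key j (by omega)]
    have : (descPochhammer ℝ j).coeff N = 0 := by
      apply Polynomial.coeff_eq_zero_of_natDegree_lt
      rw [descPochhammer_natDegree]
      omega
    rw [this, mul_zero]
  · rw [key N le_rfl]
    have : (descPochhammer ℝ N).coeff N = 1 := by
      have hmon := monic_descPochhammer ℝ N
      have := hmon.leadingCoeff
      rwa [Polynomial.leadingCoeff, descPochhammer_natDegree] at this
    rw [this, mul_one]
    exact hC₀ne
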